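/- Consider the directed network with vertex set {A, B, C, O, x}, boundary vertices ∂V = {A, B, C, O}, and edges, each of capacity 1: A → O, O → C, A → C, C → A, C → x, x → O, O → B, B → x. This network is not balanced, and its cycle-flow entropies satisfy S({C}) = 2, S({A,C}) = 1, S({B,C}) = 2, S({A,B,C}) = 2; in particular strong subadditivity fails: S({A,C}) + S({B,C}) < S({C}) + S({A,B,C}). -/

import Mathlib

open scoped Classical

/-- An edge cycle: a nonempty cyclically ordered sequence of distinct directed
edges (each a source-target pair) with the target of each edge equal to the
source of the next (cyclically). -/
structure EdgeCycle (V : Type*) where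
  n : ℕ
  npos : 0 < n
  edge : Fin n → V × V
  inj : Function.Injective edge
  chain : ∀ i : Fin n, (edge i).2 = (edge ⟨(i.val + 1) % n, Nat.mod_lt _ npos⟩).1

/-- Membership of a directed edge in an edge cycle. -/
def EdgeCycle.Mem {V : Type*} (C : EdgeCycle V) (e : V × V) : Prop :=
  ∃ i, C.edge i = e

/-- The cycle visits a vertex of `S`: some edge of the cycle has its target in `S`. -/
def EdgeCycle.Visits {V : Type*} (C : EdgeCycle V) (S : Finset V) : Prop :=
  ∃ i, (C.edge i).2 ∈ S

/-- A simple cycle flow: an edge cycle together with a nonnegative flux. -/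
structure CycleFlow (V : Type*) where
  cyc : EdgeCycle V
  flux : ℝ
  flux_nonneg : 0 ≤ flux

/-- The total load that a finite family of simple cycle flows places on the
directed edge `(u, v)`. -/
noncomputable def edgeLoad {V : Type*} (F : List (CycleFlow V)) (u v : V) : ℝ :=
  (F.map (fun C => if C.cyc.Mem (u, v) then C.flux else 0)).sum

/-- A finite family of simple cycle flows is a multi-cycle flow on the network
with capacity function `c` if on every edge the total load is at most the capacity. -/
def Feasible {V : Type*} (c : V → V → ℝ) (F : List (CycleFlow V)) : Prop :=
  ∀ u v, edgeLoad F u v ≤ c u v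

/-- The flux of a multi-cycle flow between two (disjoint) vertex sets `I` and `J`:
the sum of the fluxes of those simple cycle flows visiting both a vertex of `I`
and a vertex of `J`. -/
noncomputable def mflux {V : Type*} (F : List (CycleFlow V)) (I J : Finset V) : ℝ :=
  (F.map (fun C => if C.cyc.Visits I ∧ C.cyc.Visits J then C.flux else 0)).sum

/-- The cycle-flow entropy of a subset `I` of the boundary vertices `bdry`:
the maximal flux between `I` and its boundary complement over all
multi-cycle flows. -/
noncomputable def entropy {V : Type*} (c : V → V → ℝ) (bdry I : Finset V) : ℝ :=
  sSup { x | ∃ F : List (CycleFlow V), Feasible c F ∧ mflux F I (bdry \ I) = x }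

/-- A network is balanced if at every vertex the total capacity of ingoing edges
equals the total capacity of outgoing edges. -/
def BalancedNet {V : Type*} [Fintype V] (c : V → V → ℝ) : Prop :=
  ∀ v : V, (∑ u, c u v) = ∑ u, c v u

/-- The residual capacity function of a network `c` with respect to a
multi-cycle flow `F`. -/
noncomputable def resid {V : Type*} (c : V → V → ℝ) (F : List (CycleFlow V)) : V → V → ℝ :=
  fun u v => c u v - edgeLoad F u v

/-- `F'` is a multi-cycle subflow of `F`: same edge cycles, smaller fluxes. -/
def Subflow {V : Type*} (F' F : List (CycleFlow V)) : Prop :=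
  List.Forall₂ (fun C' C => C'.cyc = C.cyc ∧ C'.flux ≤ C.flux) F' F

/-- The nesting property: for every pair of disjoint boundary subsets `I`, `J`
there is a single multi-cycle flow simultaneously maximizing the flux through
`I` and through `I ∪ J`. -/
def Nesting {V : Type*} (c : V → V → ℝ) (bdry : Finset V) : Prop :=
  ∀ I J : Finset V, I ⊆ bdry → J ⊆ bdry → Disjoint I J →
    ∃ F : List (CycleFlow V), Feasible c F ∧
      mflux F I (bdry \ I) = entropy c bdry I ∧
      mflux F (I ∪ J) (bdry \ (I ∪ J)) = entropy c bdry (I ∪ J)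

/-- The unbalanced network of Figure 3: vertices `A = 0, B = 1, C = 2, O = 3, x = 4`
(with `x` internal), and edges of capacity `1`:
`A → O, O → C, A → C, C → A, C → x, x → O, O → B, B → x`. -/
noncomputable def cap14 : Fin 5 → Fin 5 → ℝ := fun u v =>
  if (u, v) ∈ ([(0, 3), (3, 2), (0, 2), (2, 0), (2, 4), (4, 3), (3, 1), (1, 4)] :
      List (Fin 5 × Fin 5)) then 1 else 0

-- auxiliary lemmas, appended after prologue

/-- Every source of an edge in a cycle is the target of some edge. -/
lemma EdgeCycle.source_is_target {V : Type*} (C : EdgeCycle V) (i : Fin C.n) :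
    ∃ j, (C.edge j).2 = (C.edge i).1 := by
  have hn := C.npos
  refine ⟨⟨(i.val + C.n - 1) % C.n, Nat.mod_lt _ hn⟩, ?_⟩
  have h := C.chain ⟨(i.val + C.n - 1) % C.n, Nat.mod_lt _ hn⟩
  rw [h]
  have hidx : (⟨((i.val + C.n - 1) % C.n + 1) % C.n, Nat.mod_lt _ hn⟩ : Fin C.n) = i := by
    apply Fin.ext
    simp only
    rw [Nat.mod_add_mod]
    have h2 : i.val + C.n - 1 + 1 = i.val + C.n := by omega
    rw [h2, Nat.add_mod_right, Nat.mod_eq_of_lt i.isLt]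
  rw [hidx]

/-- If a cycle's targets leave a set and enter it, some edge crosses into it. -/
lemma EdgeCycle.exists_enter {V : Type*} (C : EdgeCycle V) (S : Set V)
    (h1 : ∃ i, (C.edge i).2 ∉ S) (h2 : ∃ j, (C.edge j).2 ∈ S) :
    ∃ k, (C.edge k).1 ∉ S ∧ (C.edge k).2 ∈ S := by
  obtain ⟨i, hi⟩ := h1
  obtain ⟨j, hj⟩ := h2
  have hn := C.npos
  have hex : ∃ k : ℕ, (C.edge ⟨(i.val + k) % C.n, Nat.mod_lt _ hn⟩).2 ∈ S := by
    refine ⟨j.val + C.n - i.val, ?_⟩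
    have h : i.val + (j.val + C.n - i.val) = j.val + C.n := by
      have := i.isLt; omega
    rw [h]
    have : (j.val + C.n) % C.n = j.val := by
      rw [Nat.add_mod_right, Nat.mod_eq_of_lt j.isLt]
    have h4 : (⟨(j.val + C.n) % C.n, Nat.mod_lt _ hn⟩ : Fin C.n) = j :=
      Fin.ext this
    rw [h4]
    exact hj
  classical
  set m := Nat.find hex with hm
  have hms := Nat.find_spec hex
  have hmpos : 0 < m := by
    rcases Nat.eq_zero_or_pos m with h0 | h0
    · exfalso
      have := hms
      rw [← hm] at this
      rw [h0] at this
      apply hi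
      have h5 : (⟨(i.val + 0) % C.n, Nat.mod_lt _ hn⟩ : Fin C.n) = i :=
        Fin.ext (by simp [Nat.mod_eq_of_lt i.isLt])
      rw [h5] at this
      exact this
    · exact h0
  have hpred : (C.edge ⟨(i.val + (m - 1)) % C.n, Nat.mod_lt _ hn⟩).2 ∉ S :=
    Nat.find_min hex (by omega)
  refine ⟨⟨(i.val + m) % C.n, Nat.mod_lt _ hn⟩, ?_, hms⟩
  have hch := C.chain ⟨(i.val + (m - 1)) % C.n, Nat.mod_lt _ hn⟩
  have harith : ((i.val + (m - 1)) % C.n + 1) % C.n = (i.val + m) % C.n := by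
    rw [Nat.mod_add_mod]
    congr 1
    omega
  have : (C.edge ⟨(i.val + (m - 1)) % C.n, Nat.mod_lt _ hn⟩).2
      = (C.edge ⟨(i.val + m) % C.n, Nat.mod_lt _ hn⟩).1 := by
    rw [hch]
    exact congrArg (fun z => (C.edge z).1) (Fin.ext harith)
  rw [← this]
  exact hpred

lemma mflux_le_sum {V : Type*} (F : List (CycleFlow V)) (I J : Finset V)
    (T : Finset (V × V))
    (h : ∀ C : CycleFlow V, C ∈ F → C.cyc.Visits I → C.cyc.Visits J →
      ∃ e ∈ T, C.cyc.Mem e) :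
    mflux F I J ≤ ∑ e ∈ T, edgeLoad F e.1 e.2 := by
  classical
  induction F with
  | nil => simp [mflux, edgeLoad]
  | cons C F ih =>
    have hC := h C List.mem_cons_self
    have hF : mflux F I J ≤ ∑ e ∈ T, edgeLoad F e.1 e.2 :=
      ih (fun C' hC' => h C' (List.mem_cons_of_mem _ hC'))
    have hsplit : ∀ e : V × V, edgeLoad (C :: F) e.1 e.2
        = (if C.cyc.Mem e then C.flux else 0) + edgeLoad F e.1 e.2 := by
      intro e; simp [edgeLoad]
    have hmf : mflux (C :: F) I J
        = (if C.cyc.Visits I ∧ C.cyc.Visits J then C.flux else 0) + mflux F I J := by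
      simp [mflux]
    rw [hmf]
    calc (if C.cyc.Visits I ∧ C.cyc.Visits J then C.flux else 0) + mflux F I J
        ≤ (∑ e ∈ T, if C.cyc.Mem e then C.flux else 0) + ∑ e ∈ T, edgeLoad F e.1 e.2 := by
          apply add_le_add _ hF
          split_ifs with hvis
          · obtain ⟨e, heT, heM⟩ := hC hvis.1 hvis.2
            refine Finset.single_le_sum (f := fun e => if C.cyc.Mem e then C.flux else 0)
              (fun e _ => by split_ifs <;> simp [C.flux_nonneg]) heT |>.trans_eq' ?_
            rw [if_pos heM]
          · exact Finset.sum_nonneg (fun e _ => by by_cases h : C.cyc.Mem e <;> simp [h, C.flux_nonneg])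
      _ = ∑ e ∈ T, edgeLoad (C :: F) e.1 e.2 := by
          rw [← Finset.sum_add_distrib]
          exact Finset.sum_congr rfl (fun e _ => (hsplit e).symm)
/-- The cycle `A → O → C → A`. -/
def cyc1 : EdgeCycle (Fin 5) :=
  ⟨3, by norm_num, ![(0,3),(3,2),(2,0)], by decide, by decide⟩

/-- The cycle `A → C → A`. -/
def cyc2 : EdgeCycle (Fin 5) :=
  ⟨2, by norm_num, ![(0,2),(2,0)], by decide, by decide⟩

/-- The cycle `C → x → O → C`. -/
def cyc3 : EdgeCycle (Fin 5) :=
  ⟨3, by norm_num, ![(2,4),(4,3),(3,2)], by decide, by decide⟩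

/-- The cycle `O → B → x → O`. -/
def cyc4 : EdgeCycle (Fin 5) :=
  ⟨3, by norm_num, ![(3,1),(1,4),(4,3)], by decide, by decide⟩

lemma mem_cyc1 : ∀ e, cyc1.Mem e ↔ e ∈ ([(0,3),(3,2),(2,0)] : List (Fin 5 × Fin 5)) := by
  unfold EdgeCycle.Mem cyc1
  decide

lemma mem_cyc2 : ∀ e, cyc2.Mem e ↔ e ∈ ([(0,2),(2,0)] : List (Fin 5 × Fin 5)) := by
  unfold EdgeCycle.Mem cyc2
  decide

lemma mem_cyc3 : ∀ e, cyc3.Mem e ↔ e ∈ ([(2,4),(4,3),(3,2)] : List (Fin 5 × Fin 5)) := by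
  unfold EdgeCycle.Mem cyc3
  decide

lemma mem_cyc4 : ∀ e, cyc4.Mem e ↔ e ∈ ([(3,1),(1,4),(4,3)] : List (Fin 5 × Fin 5)) := by
  unfold EdgeCycle.Mem cyc4
  decide

lemma my_mem_sdiff {α : Type*} {s t : Finset α} {a : α} :
    a ∈ (s \ t : Finset α) ↔ a ∈ s ∧ a ∉ t := Finset.mem_sdiff

lemma set_sub1 : ∀ v : Fin 5, v ∈ ({2} : Finset (Fin 5)) → v = 2 := by decide
lemma set_sub2 : ∀ v : Fin 5, v ∈ ({0,1,2,3} : Finset (Fin 5)) →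
    v ∉ ({0,1,2} : Finset (Fin 5)) → v = 3 := by decide
lemma set_sub3 : ∀ v : Fin 5, v ∈ ({0,2} : Finset (Fin 5)) → (v = 0 ∨ v = 2) := by decide
lemma set_sub4 : ∀ v : Fin 5, v ∈ ({0,1,2,3} : Finset (Fin 5)) →
    v ∉ ({0,2} : Finset (Fin 5)) → ¬(v = 0 ∨ v = 2) := by decide
lemma set_sub5 : ∀ v : Fin 5, v ∈ ({0,1,2,3} : Finset (Fin 5)) →
    v ∉ ({1,2} : Finset (Fin 5)) → (v = 0 ∨ v = 3) := by decide

/-- The entropy of `{C}` is `2`. -/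
lemma entropyC : entropy cap14 ({0, 1, 2, 3} : Finset (Fin 5)) ({2} : Finset (Fin 5)) = 2 := by
  apply IsGreatest.csSup_eq
  constructor
  · refine ⟨[⟨cyc2, 1, one_pos.le⟩, ⟨cyc3, 1, one_pos.le⟩], ?_, ?_⟩
    · intro u v
      simp only [edgeLoad, List.map, List.sum_cons, List.sum_nil, mem_cyc2, mem_cyc3, cap14]
      fin_cases u <;> fin_cases v <;> simp (config := { decide := true })
    · simp only [mflux, List.map, List.sum_cons, List.sum_nil]
      rw [if_pos ⟨⟨⟨0, by decide⟩, by decide⟩,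
            ⟨⟨1, by decide⟩, by rw [my_mem_sdiff]; exact ⟨by decide, by decide⟩⟩⟩,
        if_pos ⟨⟨⟨2, by decide⟩, by decide⟩,
            ⟨⟨1, by decide⟩, by rw [my_mem_sdiff]; exact ⟨by decide, by decide⟩⟩⟩]
      norm_num
  · rintro x ⟨F, hF, rfl⟩
    refine le_trans
      (mflux_le_sum F _ _ (Finset.univ.filter (fun e : Fin 5 × Fin 5 => e.2 = 2))
        fun C _ hI _ => ?_)
      (le_trans (Finset.sum_le_sum fun e _ => hF e.1 e.2) (le_of_eq ?_))
    · obtain ⟨i, hi⟩ := hI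
      exact ⟨C.cyc.edge i, Finset.mem_filter.2 ⟨Finset.mem_univ _, set_sub1 _ hi⟩, ⟨i, rfl⟩⟩
    · have h : Finset.univ.filter (fun e : Fin 5 × Fin 5 => e.2 = 2)
          = ({(0,2),(1,2),(2,2),(3,2),(4,2)} : Finset (Fin 5 × Fin 5)) := by decide
      rw [h]
      simp (config := { decide := true }) [Finset.sum_insert, cap14]
      try norm_cast

/-- The entropy of `{A, C}` is `1`. -/
lemma entropyAC : entropy cap14 ({0, 1, 2, 3} : Finset (Fin 5)) ({0, 2} : Finset (Fin 5)) = 1 := by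
  apply IsGreatest.csSup_eq
  constructor
  · refine ⟨[⟨cyc1, 1, one_pos.le⟩], ?_, ?_⟩
    · intro u v
      simp only [edgeLoad, List.map, List.sum_cons, List.sum_nil, mem_cyc1, cap14]
      fin_cases u <;> fin_cases v <;> simp (config := { decide := true })
    · simp only [mflux, List.map, List.sum_cons, List.sum_nil]
      rw [if_pos ⟨⟨⟨1, by decide⟩, by decide⟩,
            ⟨⟨0, by decide⟩, by rw [my_mem_sdiff]; exact ⟨by decide, by decide⟩⟩⟩]
      norm_num
  · rintro x ⟨F, hF, rfl⟩
    refine le_trans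
      (mflux_le_sum F _ _ (Finset.univ.filter
          (fun e : Fin 5 × Fin 5 => (e.2 = 0 ∨ e.2 = 2) ∧ ¬(e.1 = 0 ∨ e.1 = 2)))
        fun C _ hI hJ => ?_)
      (le_trans (Finset.sum_le_sum fun e _ => hF e.1 e.2) (le_of_eq ?_))
    · obtain ⟨j, hj⟩ := hI
      obtain ⟨i, hi⟩ := hJ
      rw [my_mem_sdiff] at hi
      obtain ⟨hi1, hi2⟩ := hi
      obtain ⟨k, hk1, hk2⟩ := C.cyc.exists_enter {v : Fin 5 | v = 0 ∨ v = 2}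
        ⟨i, set_sub4 _ hi1 hi2⟩ ⟨j, set_sub3 _ hj⟩
      exact ⟨C.cyc.edge k, Finset.mem_filter.2 ⟨Finset.mem_univ _, hk2, hk1⟩, ⟨k, rfl⟩⟩
    · have h : Finset.univ.filter
            (fun e : Fin 5 × Fin 5 => (e.2 = 0 ∨ e.2 = 2) ∧ ¬(e.1 = 0 ∨ e.1 = 2))
          = ({(1,0),(3,0),(4,0),(1,2),(3,2),(4,2)} : Finset (Fin 5 × Fin 5)) := by decide
      rw [h]
      simp (config := { decide := true }) [Finset.sum_insert, cap14]
      try norm_cast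

/-- The entropy of `{B, C}` is `2`. -/
lemma entropyBC : entropy cap14 ({0, 1, 2, 3} : Finset (Fin 5)) ({1, 2} : Finset (Fin 5)) = 2 := by
  apply IsGreatest.csSup_eq
  constructor
  · refine ⟨[⟨cyc2, 1, one_pos.le⟩, ⟨cyc4, 1, one_pos.le⟩], ?_, ?_⟩
    · intro u v
      simp only [edgeLoad, List.map, List.sum_cons, List.sum_nil, mem_cyc2, mem_cyc4, cap14]
      fin_cases u <;> fin_cases v <;> simp (config := { decide := true })
    · simp only [mflux, List.map, List.sum_cons, List.sum_nil]
      rw [if_pos ⟨⟨⟨0, by decide⟩, by decide⟩,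
            ⟨⟨1, by decide⟩, by rw [my_mem_sdiff]; exact ⟨by decide, by decide⟩⟩⟩,
        if_pos ⟨⟨⟨0, by decide⟩, by decide⟩,
            ⟨⟨2, by decide⟩, by rw [my_mem_sdiff]; exact ⟨by decide, by decide⟩⟩⟩]
      norm_num
  · rintro x ⟨F, hF, rfl⟩
    refine le_trans
      (mflux_le_sum F _ _ (Finset.univ.filter
          (fun e : Fin 5 × Fin 5 => e.2 = 0 ∨ (e.2 = 3 ∧ ¬ e.1 = 0)))
        fun C _ _ hJ => ?_)
      (le_trans (Finset.sum_le_sum fun e _ => hF e.1 e.2) (le_of_eq ?_))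
    · obtain ⟨i, hi⟩ := hJ
      rw [my_mem_sdiff] at hi
      obtain ⟨hi1, hi2⟩ := hi
      rcases set_sub5 _ hi1 hi2 with h0 | h3
      · exact ⟨C.cyc.edge i,
          Finset.mem_filter.2 ⟨Finset.mem_univ _, Or.inl h0⟩, ⟨i, rfl⟩⟩
      · by_cases hsrc : (C.cyc.edge i).1 = 0
        · obtain ⟨j, hj⟩ := C.cyc.source_is_target i
          exact ⟨C.cyc.edge j,
            Finset.mem_filter.2 ⟨Finset.mem_univ _, Or.inl (hj.trans hsrc)⟩, ⟨j, rfl⟩⟩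
        · exact ⟨C.cyc.edge i,
            Finset.mem_filter.2 ⟨Finset.mem_univ _, Or.inr ⟨h3, hsrc⟩⟩, ⟨i, rfl⟩⟩
    · have h : Finset.univ.filter
            (fun e : Fin 5 × Fin 5 => e.2 = 0 ∨ (e.2 = 3 ∧ ¬ e.1 = 0))
          = ({(0,0),(1,0),(2,0),(3,0),(4,0),(1,3),(2,3),(3,3),(4,3)} :
              Finset (Fin 5 × Fin 5)) := by decide
      rw [h]
      simp (config := { decide := true }) [Finset.sum_insert, cap14]
      try norm_cast

/-- The entropy of `{A, B, C}` is `2`. -/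
lemma entropyABC :
    entropy cap14 ({0, 1, 2, 3} : Finset (Fin 5)) ({0, 1, 2} : Finset (Fin 5)) = 2 := by
  apply IsGreatest.csSup_eq
  constructor
  · refine ⟨[⟨cyc1, 1, one_pos.le⟩, ⟨cyc4, 1, one_pos.le⟩], ?_, ?_⟩
    · intro u v
      simp only [edgeLoad, List.map, List.sum_cons, List.sum_nil, mem_cyc1, mem_cyc4, cap14]
      fin_cases u <;> fin_cases v <;> simp (config := { decide := true })
    · simp only [mflux, List.map, List.sum_cons, List.sum_nil]
      rw [if_pos ⟨⟨⟨1, by decide⟩, by decide⟩,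
            ⟨⟨0, by decide⟩, by rw [my_mem_sdiff]; exact ⟨by decide, by decide⟩⟩⟩,
        if_pos ⟨⟨⟨0, by decide⟩, by decide⟩,
            ⟨⟨2, by decide⟩, by rw [my_mem_sdiff]; exact ⟨by decide, by decide⟩⟩⟩]
      norm_num
  · rintro x ⟨F, hF, rfl⟩
    refine le_trans
      (mflux_le_sum F _ _ (Finset.univ.filter (fun e : Fin 5 × Fin 5 => e.2 = 3))
        fun C _ _ hJ => ?_)
      (le_trans (Finset.sum_le_sum fun e _ => hF e.1 e.2) (le_of_eq ?_))
    · obtain ⟨i, hi⟩ := hJ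
      rw [my_mem_sdiff] at hi
      obtain ⟨hi1, hi2⟩ := hi
      exact ⟨C.cyc.edge i,
        Finset.mem_filter.2 ⟨Finset.mem_univ _, set_sub2 _ hi1 hi2⟩, ⟨i, rfl⟩⟩
    · have h : Finset.univ.filter (fun e : Fin 5 × Fin 5 => e.2 = 3)
          = ({(0,3),(1,3),(2,3),(3,3),(4,3)} : Finset (Fin 5 × Fin 5)) := by decide
      rw [h]
      simp (config := { decide := true }) [Finset.sum_insert, cap14]
      try norm_cast

lemma notBalanced : ¬ BalancedNet cap14 := by
  intro h
  have h4 := h 4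
  rw [Fin.sum_univ_five, Fin.sum_univ_five] at h4
  simp (config := { decide := true }) [cap14] at h4
/-- This network is unbalanced, its entropies are
`S(C) = 2, S(AC) = 1, S(BC) = 2, S(ABC) = 2`, and strong subadditivity fails. -/
theorem stmt14 :
    ¬ BalancedNet cap14 ∧
    entropy cap14 ({0, 1, 2, 3} : Finset (Fin 5)) ({2} : Finset (Fin 5)) = 2 ∧
    entropy cap14 ({0, 1, 2, 3} : Finset (Fin 5)) ({0, 2} : Finset (Fin 5)) = 1 ∧
    entropy cap14 ({0, 1, 2, 3} : Finset (Fin 5)) ({1, 2} : Finset (Fin 5)) = 2 ∧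
    entropy cap14 ({0, 1, 2, 3} : Finset (Fin 5)) ({0, 1, 2} : Finset (Fin 5)) = 2 ∧
    entropy cap14 ({0, 1, 2, 3} : Finset (Fin 5)) ({0, 2} : Finset (Fin 5)) +
        entropy cap14 ({0, 1, 2, 3} : Finset (Fin 5)) ({1, 2} : Finset (Fin 5)) <
      entropy cap14 ({0, 1, 2, 3} : Finset (Fin 5)) ({2} : Finset (Fin 5)) +
        entropy cap14 ({0, 1, 2, 3} : Finset (Fin 5)) ({0, 1, 2} : Finset (Fin 5)) := by
  refine ⟨notBalanced, entropyC, entropyAC, entropyBC, entropyABC, ?_⟩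
  rw [entropyC, entropyAC, entropyBC, entropyABC]
  norm_num
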